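/- Let μ ∈ (0,1) and h > 0, and let Φ denote the one-step map of the trapezoidal variational integrator for the PCRTBP with zero control, expressed in the canonical coordinates (x, y, p_x, p_y) with p_x = ẋ − y and p_y = ẏ + x; Φ is defined on the open set of points for which r₁, r₂ > 0 both at the current step and at the updated step. Then Φ is symplectic: at every point of its domain where Φ is differentiable, its Jacobian matrix DΦ satisfies (DΦ)ᵀ J (DΦ) = J, where J is the canonical 4×4 symplectic matrix pairing (x, y) with (p_x, p_y). -/

import Mathlib

open Matrix

noncomputable def clm2 (c1 c2 : ℝ) : (ℝ × ℝ) →L[ℝ] ℝ :=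
  c1 • ContinuousLinearMap.fst ℝ ℝ ℝ + c2 • ContinuousLinearMap.snd ℝ ℝ ℝ

@[simp] lemma clm2_apply (c1 c2 : ℝ) (v : ℝ × ℝ) :
    clm2 c1 c2 v = c1 * v.1 + c2 * v.2 := by
  simp [clm2]

lemma hasF_g1 (κ e w1 w2 : ℝ) (hw : 0 < Real.sqrt ((w1 + e)^2 + w2^2)) :
    HasFDerivAt (fun z : ℝ × ℝ => κ * (z.1 + e) / (Real.sqrt ((z.1 + e)^2 + z.2^2))^3)
      (clm2 (κ * (1/(Real.sqrt ((w1 + e)^2 + w2^2))^3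
                  - 3*(w1 + e)^2/(Real.sqrt ((w1 + e)^2 + w2^2))^5))
            (-(3*κ*(w1 + e)*w2/(Real.sqrt ((w1 + e)^2 + w2^2))^5))) (w1, w2) := by
  have hs0 : (0:ℝ) < (w1 + e)^2 + w2^2 := Real.sqrt_pos.mp hw
  have hr0 : Real.sqrt ((w1 + e)^2 + w2^2) ≠ 0 := ne_of_gt hw
  have h1 : HasFDerivAt (fun z : ℝ × ℝ => z.1 + e)
      (ContinuousLinearMap.fst ℝ ℝ ℝ) (w1, w2) := hasFDerivAt_fst.add_const e
  have h1sq : HasFDerivAt (fun z : ℝ × ℝ => (z.1 + e)^2)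
      (((2:ℝ) * (w1 + e)^1) • ContinuousLinearMap.fst ℝ ℝ ℝ) (w1, w2) := by
    simpa [Function.comp_def] using HasDerivAt.comp_hasFDerivAt (𝕜 := ℝ) (w1, w2) (hasDerivAt_pow 2 (w1 + e)) h1
  have h2sq : HasFDerivAt (fun z : ℝ × ℝ => z.2^2)
      (((2:ℝ) * w2^1) • ContinuousLinearMap.snd ℝ ℝ ℝ) (w1, w2) := by
    simpa [Function.comp_def] using HasDerivAt.comp_hasFDerivAt (𝕜 := ℝ) (w1, w2) (hasDerivAt_pow 2 w2)
      (hasFDerivAt_snd (p := (w1, w2)))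
  have hs : HasFDerivAt (fun z : ℝ × ℝ => (z.1 + e)^2 + z.2^2)
      (((2:ℝ) * (w1 + e)^1) • ContinuousLinearMap.fst ℝ ℝ ℝ
        + ((2:ℝ) * w2^1) • ContinuousLinearMap.snd ℝ ℝ ℝ) (w1, w2) := h1sq.add h2sq
  have hr : HasFDerivAt (fun z : ℝ × ℝ => Real.sqrt ((z.1 + e)^2 + z.2^2))
      ((1/(2 * Real.sqrt ((w1 + e)^2 + w2^2))) •
        (((2:ℝ) * (w1 + e)^1) • ContinuousLinearMap.fst ℝ ℝ ℝ
          + ((2:ℝ) * w2^1) • ContinuousLinearMap.snd ℝ ℝ ℝ)) (w1, w2) :=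
    (Real.hasDerivAt_sqrt (ne_of_gt hs0)).comp_hasFDerivAt (w1, w2) hs
  have hr3 := HasDerivAt.comp_hasFDerivAt (𝕜 := ℝ) (w1, w2)
    (hasDerivAt_pow 3 (Real.sqrt ((w1 + e)^2 + w2^2))) hr
  have hinv := HasDerivAt.comp_hasFDerivAt (𝕜 := ℝ) (w1, w2)
    (hasDerivAt_inv (pow_ne_zero 3 hr0)) hr3
  have hnum : HasFDerivAt (fun z : ℝ × ℝ => κ * (z.1 + e))
      (κ • ContinuousLinearMap.fst ℝ ℝ ℝ) (w1, w2) := h1.const_mul κ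
  have hmul := hnum.mul hinv
  have hgoal : HasFDerivAt
      (fun z : ℝ × ℝ => κ * (z.1 + e) * ((Real.sqrt ((z.1 + e)^2 + z.2^2))^3)⁻¹)
      (clm2 (κ * (1/(Real.sqrt ((w1 + e)^2 + w2^2))^3
                  - 3*(w1 + e)^2/(Real.sqrt ((w1 + e)^2 + w2^2))^5))
            (-(3*κ*(w1 + e)*w2/(Real.sqrt ((w1 + e)^2 + w2^2))^5))) (w1, w2) := by
    refine hmul.congr_fderiv ?_
    set r := Real.sqrt ((w1 + e)^2 + w2^2) with hrdef
    ext v <;>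
    · simp [Function.comp]
      field_simp
      ring
  simpa only [div_eq_mul_inv] using hgoal

lemma hasF_g2 (κ e w1 w2 : ℝ) (hw : 0 < Real.sqrt ((w1 + e)^2 + w2^2)) :
    HasFDerivAt (fun z : ℝ × ℝ => κ * z.2 / (Real.sqrt ((z.1 + e)^2 + z.2^2))^3)
      (clm2 (-(3*κ*(w1 + e)*w2/(Real.sqrt ((w1 + e)^2 + w2^2))^5))
            (κ * (1/(Real.sqrt ((w1 + e)^2 + w2^2))^3
                  - 3*w2^2/(Real.sqrt ((w1 + e)^2 + w2^2))^5))) (w1, w2) := by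
  have hs0 : (0:ℝ) < (w1 + e)^2 + w2^2 := Real.sqrt_pos.mp hw
  have hr0 : Real.sqrt ((w1 + e)^2 + w2^2) ≠ 0 := ne_of_gt hw
  have h1 : HasFDerivAt (fun z : ℝ × ℝ => z.1 + e)
      (ContinuousLinearMap.fst ℝ ℝ ℝ) (w1, w2) := hasFDerivAt_fst.add_const e
  have h1sq : HasFDerivAt (fun z : ℝ × ℝ => (z.1 + e)^2)
      (((2:ℝ) * (w1 + e)^1) • ContinuousLinearMap.fst ℝ ℝ ℝ) (w1, w2) := by
    simpa [Function.comp_def] using HasDerivAt.comp_hasFDerivAt (𝕜 := ℝ) (w1, w2) (hasDerivAt_pow 2 (w1 + e)) h1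
  have h2sq : HasFDerivAt (fun z : ℝ × ℝ => z.2^2)
      (((2:ℝ) * w2^1) • ContinuousLinearMap.snd ℝ ℝ ℝ) (w1, w2) := by
    simpa [Function.comp_def] using HasDerivAt.comp_hasFDerivAt (𝕜 := ℝ) (w1, w2) (hasDerivAt_pow 2 w2)
      (hasFDerivAt_snd (p := (w1, w2)))
  have hs : HasFDerivAt (fun z : ℝ × ℝ => (z.1 + e)^2 + z.2^2)
      (((2:ℝ) * (w1 + e)^1) • ContinuousLinearMap.fst ℝ ℝ ℝ
        + ((2:ℝ) * w2^1) • ContinuousLinearMap.snd ℝ ℝ ℝ) (w1, w2) := h1sq.add h2sq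
  have hr : HasFDerivAt (fun z : ℝ × ℝ => Real.sqrt ((z.1 + e)^2 + z.2^2))
      ((1/(2 * Real.sqrt ((w1 + e)^2 + w2^2))) •
        (((2:ℝ) * (w1 + e)^1) • ContinuousLinearMap.fst ℝ ℝ ℝ
          + ((2:ℝ) * w2^1) • ContinuousLinearMap.snd ℝ ℝ ℝ)) (w1, w2) :=
    (Real.hasDerivAt_sqrt (ne_of_gt hs0)).comp_hasFDerivAt (w1, w2) hs
  have hr3 := HasDerivAt.comp_hasFDerivAt (𝕜 := ℝ) (w1, w2)
    (hasDerivAt_pow 3 (Real.sqrt ((w1 + e)^2 + w2^2))) hr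
  have hinv := HasDerivAt.comp_hasFDerivAt (𝕜 := ℝ) (w1, w2)
    (hasDerivAt_inv (pow_ne_zero 3 hr0)) hr3
  have hnum : HasFDerivAt (fun z : ℝ × ℝ => κ * z.2)
      (κ • ContinuousLinearMap.snd ℝ ℝ ℝ) (w1, w2) :=
    (hasFDerivAt_snd (p := (w1, w2))).const_mul κ
  have hmul := hnum.mul hinv
  have hgoal : HasFDerivAt
      (fun z : ℝ × ℝ => κ * z.2 * ((Real.sqrt ((z.1 + e)^2 + z.2^2))^3)⁻¹)
      (clm2 (-(3*κ*(w1 + e)*w2/(Real.sqrt ((w1 + e)^2 + w2^2))^5))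
            (κ * (1/(Real.sqrt ((w1 + e)^2 + w2^2))^3
                  - 3*w2^2/(Real.sqrt ((w1 + e)^2 + w2^2))^5))) (w1, w2) := by
    refine hmul.congr_fderiv ?_
    set r := Real.sqrt ((w1 + e)^2 + w2^2) with hrdef
    ext v <;>
    · simp [Function.comp]
      field_simp
      ring
  simpa only [div_eq_mul_inv] using hgoal

noncomputable def gA (m : ℝ) (w : ℝ × ℝ) : ℝ :=
  (1 - m) * (1/(Real.sqrt ((w.1 + m)^2 + w.2^2))^3
      - 3*(w.1 + m)^2/(Real.sqrt ((w.1 + m)^2 + w.2^2))^5)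
  + m * (1/(Real.sqrt ((w.1 + (m - 1))^2 + w.2^2))^3
      - 3*(w.1 + (m - 1))^2/(Real.sqrt ((w.1 + (m - 1))^2 + w.2^2))^5)

noncomputable def gB (m : ℝ) (w : ℝ × ℝ) : ℝ :=
  -(3*(1 - m)*(w.1 + m)*w.2/(Real.sqrt ((w.1 + m)^2 + w.2^2))^5)
  + -(3*m*(w.1 + (m - 1))*w.2/(Real.sqrt ((w.1 + (m - 1))^2 + w.2^2))^5)

noncomputable def gD (m : ℝ) (w : ℝ × ℝ) : ℝ :=
  (1 - m) * (1/(Real.sqrt ((w.1 + m)^2 + w.2^2))^3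
      - 3*w.2^2/(Real.sqrt ((w.1 + m)^2 + w.2^2))^5)
  + m * (1/(Real.sqrt ((w.1 + (m - 1))^2 + w.2^2))^3
      - 3*w.2^2/(Real.sqrt ((w.1 + (m - 1))^2 + w.2^2))^5)

lemma hasF_Ux (m w1 w2 : ℝ) (hw1 : 0 < Real.sqrt ((w1 + m)^2 + w2^2))
    (hw2 : 0 < Real.sqrt ((w1 + (m - 1))^2 + w2^2)) :
    HasFDerivAt (fun z : ℝ × ℝ =>
        (1 - m) * (z.1 + m) / (Real.sqrt ((z.1 + m)^2 + z.2^2))^3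
        + m * (z.1 - 1 + m) / (Real.sqrt ((z.1 - 1 + m)^2 + z.2^2))^3)
      (clm2 (gA m (w1, w2)) (gB m (w1, w2))) (w1, w2) := by
  have hrw : ∀ t : ℝ, t - 1 + m = t + (m - 1) := fun t => by ring
  simp only [hrw]
  refine ((hasF_g1 (1 - m) m w1 w2 hw1).add (hasF_g1 m (m - 1) w1 w2 hw2)).congr_fderiv ?_
  ext v <;> simp [gA, gB] <;> ring

lemma hasF_Uy (m w1 w2 : ℝ) (hw1 : 0 < Real.sqrt ((w1 + m)^2 + w2^2))
    (hw2 : 0 < Real.sqrt ((w1 + (m - 1))^2 + w2^2)) :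
    HasFDerivAt (fun z : ℝ × ℝ =>
        (1 - m) * z.2 / (Real.sqrt ((z.1 + m)^2 + z.2^2))^3
        + m * z.2 / (Real.sqrt ((z.1 - 1 + m)^2 + z.2^2))^3)
      (clm2 (gB m (w1, w2)) (gD m (w1, w2))) (w1, w2) := by
  have hrw : ∀ t : ℝ, t - 1 + m = t + (m - 1) := fun t => by ring
  simp only [hrw]
  refine ((hasF_g2 (1 - m) m w1 w2 hw1).add (hasF_g2 m (m - 1) w1 w2 hw2)).congr_fderiv ?_
  ext v <;> simp [gB, gD] <;> ring

noncomputable def eX1 (h a b : ℝ) : ℝ := (4 + 2*h^2 - 2*h^2*a - 2*h^3*b)/(4*(1+h^2))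
noncomputable def eX2 (h b d : ℝ) : ℝ := (4*h - 2*h^2*b + 2*h^3 - 2*h^3*d)/(4*(1+h^2))
noncomputable def eX3 (h : ℝ) : ℝ := (4*h)/(4*(1+h^2))
noncomputable def eX4 (h : ℝ) : ℝ := (4*h^2)/(4*(1+h^2))
noncomputable def eY1 (h a b : ℝ) : ℝ := (-(4*h) - 2*h^2*b - 2*h^3 + 2*h^3*a)/(4*(1+h^2))
noncomputable def eY2 (h b d : ℝ) : ℝ := (4 + 2*h^2 - 2*h^2*d + 2*h^3*b)/(4*(1+h^2))
noncomputable def eY3 (h : ℝ) : ℝ := (-(4*h^2))/(4*(1+h^2))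
noncomputable def eY4 (h : ℝ) : ℝ := (4*h)/(4*(1+h^2))
noncomputable def ePX1 (h a b a1 b1 : ℝ) : ℝ := (-(2*h*a1) - 2*h*a + 2*h^2*b1 - 2*h^2*b + h^3 - h^3*a1 + h^3*b*b1 - h^3*a + h^3*a*a1 + h^4*b1 - h^4*b + h^4*b*a1 - h^4*a*b1)/(4*(1+h^2))
noncomputable def ePX2 (h b d a1 b1 : ℝ) : ℝ := (-(2*h*b1) - 2*h*b - 2*h^2*a1 - 2*h^2*d - h^3*b1 + h^3*d*b1 - h^3*b + h^3*b*a1 + h^4 - h^4*a1 - h^4*d + h^4*d*a1 - h^4*b*b1)/(4*(1+h^2))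
noncomputable def ePX3 (h a1 b1 : ℝ) : ℝ := (4 + 2*h^2 - 2*h^2*a1 + 2*h^3*b1)/(4*(1+h^2))
noncomputable def ePX4 (h a1 b1 : ℝ) : ℝ := (4*h - 2*h^2*b1 + 2*h^3 - 2*h^3*a1)/(4*(1+h^2))
noncomputable def ePY1 (h a b b1 d1 : ℝ) : ℝ := (-(2*h*b1) - 2*h*b + 2*h^2*d1 + 2*h^2*a - h^3*b1 - h^3*b + h^3*b*d1 + h^3*a*b1 - h^4 + h^4*d1 + h^4*b*b1 + h^4*a - h^4*a*d1)/(4*(1+h^2))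
noncomputable def ePY2 (h b d b1 d1 : ℝ) : ℝ := (-(2*h*d1) - 2*h*d - 2*h^2*b1 + 2*h^2*b + h^3 - h^3*d1 - h^3*d + h^3*d*d1 + h^3*b*b1 - h^4*b1 + h^4*d*b1 + h^4*b - h^4*b*d1)/(4*(1+h^2))
noncomputable def ePY3 (h b1 d1 : ℝ) : ℝ := (-(4*h) - 2*h^2*b1 - 2*h^3 + 2*h^3*d1)/(4*(1+h^2))
noncomputable def ePY4 (h b1 d1 : ℝ) : ℝ := (4 + 2*h^2 - 2*h^2*d1 - 2*h^3*b1)/(4*(1+h^2))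

noncomputable def Mexp (h a b d a1 b1 d1 : ℝ) : Matrix (Fin 4) (Fin 4) ℝ :=
  !![eX1 h a b, eX2 h b d, eX3 h, eX4 h;
     eY1 h a b, eY2 h b d, eY3 h, eY4 h;
     ePX1 h a b a1 b1, ePX2 h b d a1 b1, ePX3 h a1 b1, ePX4 h a1 b1;
     ePY1 h a b b1 d1, ePY2 h b d b1 d1, ePY3 h b1 d1, ePY4 h b1 d1]

lemma quadform (M : Matrix (Fin 4) (Fin 4) ℝ) (i j : Fin 4) :
    ((Mᵀ * !![0, 0, 1, 0; 0, 0, 0, 1; -1, 0, 0, 0; 0, -1, 0, 0] * M :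
        Matrix (Fin 4) (Fin 4) ℝ)) i j
      = M 0 i * M 2 j + M 1 i * M 3 j - M 2 i * M 0 j - M 3 i * M 1 j := by
  simp [Matrix.mul_apply, Fin.sum_univ_four]
  ring

lemma key (h a b d a1 b1 d1 : ℝ) :
    (Mexp h a b d a1 b1 d1)ᵀ * !![0, 0, 1, 0; 0, 0, 0, 1; -1, 0, 0, 0; 0, -1, 0, 0]
      * Mexp h a b d a1 b1 d1
      = !![(0:ℝ), 0, 1, 0; 0, 0, 0, 1; -1, 0, 0, 0; 0, -1, 0, 0] := by
  have hD2 : ((4*(1+h^2))*(4*(1+h^2)) : ℝ) ≠ 0 := by positivity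
  ext i j
  rw [quadform]
  fin_cases i <;> fin_cases j <;>
  · simp only [Mexp, Fin.zero_eta, Fin.mk_one, Fin.isValue, show (⟨2,by norm_num⟩ : Fin 4) = 2 from rfl,
      show (⟨3,by norm_num⟩ : Fin 4) = 3 from rfl, Matrix.cons_val', Matrix.cons_val_zero,
      Matrix.cons_val_one, Matrix.head_cons, Matrix.empty_val', Matrix.cons_val_fin_one,
      Matrix.head_fin_const, Matrix.cons_val_two, Matrix.tail_cons, Matrix.cons_val_three,
      Matrix.of_apply]
    simp only [eX1, eX2, eX3, eX4, eY1, eY2, eY3, eY4,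
      ePX1, ePX2, ePX3, ePX4, ePY1, ePY2, ePY3, ePY4, div_mul_div_comm]
    rw [← add_div, div_sub_div_same, div_sub_div_same, div_eq_iff hD2]
    ring

noncomputable def rowc (c0 c1 c2 c3 : ℝ) : (Fin 4 → ℝ) →L[ℝ] ℝ :=
  c0 • ContinuousLinearMap.proj 0 + c1 • ContinuousLinearMap.proj 1
    + c2 • ContinuousLinearMap.proj 2 + c3 • ContinuousLinearMap.proj 3

@[simp] lemma rowc_apply (c0 c1 c2 c3 : ℝ) (v : Fin 4 → ℝ) :
    rowc c0 c1 c2 c3 v = c0 * v 0 + c1 * v 1 + c2 * v 2 + c3 * v 3 := by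
  simp [rowc]

noncomputable def XF (h : ℝ) (Ux Uy : ℝ → ℝ → ℝ) (q : Fin 4 → ℝ) : ℝ :=
  (1/(1 + h^2)) * (h * (q 2 + q 1) + h^2 * (q 3 - q 0)
    + q 0 * (1 + 3*h^2/2) + (h^3/2) * q 1 - (h^3/2) * Uy (q 0) (q 1) - (h^2/2) * Ux (q 0) (q 1))

noncomputable def YF (h : ℝ) (Ux Uy : ℝ → ℝ → ℝ) (q : Fin 4 → ℝ) : ℝ :=
  h * (q 3 - q 0) + h * q 0 - h * XF h Ux Uy q + q 1 + (h^2/2) * q 1 - (h^2/2) * Uy (q 0) (q 1)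

noncomputable def PXF (h : ℝ) (Ux Uy : ℝ → ℝ → ℝ) (q : Fin 4 → ℝ) : ℝ :=
  ((q 2 + q 1) - 2 * q 1 + 2 * YF h Ux Uy q + (h/2) * (XF h Ux Uy q + q 0)
    - (h/2) * Ux (XF h Ux Uy q) (YF h Ux Uy q) - (h/2) * Ux (q 0) (q 1)) - YF h Ux Uy q

noncomputable def PYF (h : ℝ) (Ux Uy : ℝ → ℝ → ℝ) (q : Fin 4 → ℝ) : ℝ :=
  ((q 3 - q 0) + 2 * q 0 - 2 * XF h Ux Uy q + (h/2) * (YF h Ux Uy q + q 1)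
    - (h/2) * Uy (XF h Ux Uy q) (YF h Ux Uy q) - (h/2) * Uy (q 0) (q 1)) + XF h Ux Uy q

set_option maxHeartbeats 1000000 in
/-- The one-step map Φ of the trapezoidal variational integrator for the
PCRTBP (zero control), expressed in canonical coordinates (x, y, p_x, p_y) with
p_x = ẋ − y, p_y = ẏ + x, is symplectic: wherever it is defined (distances to the
primaries positive at the current and updated step) and differentiable, its Jacobian
matrix satisfies (DΦ)ᵀ J (DΦ) = J for the canonical symplectic matrix J. -/
theorem stmt12 (μ h : ℝ) (hμ : μ ∈ Set.Ioo (0:ℝ) 1) (hh : 0 < h)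
    (r1 r2 Ux Uy : ℝ → ℝ → ℝ)
    (hr1def : ∀ a b, r1 a b = Real.sqrt ((a + μ)^2 + b^2))
    (hr2def : ∀ a b, r2 a b = Real.sqrt ((a - 1 + μ)^2 + b^2))
    (hUx : ∀ a b, Ux a b =
      (1 - μ) * (a + μ) / (r1 a b)^3 + μ * (a - 1 + μ) / (r2 a b)^3)
    (hUy : ∀ a b, Uy a b =
      (1 - μ) * b / (r1 a b)^3 + μ * b / (r2 a b)^3)
    (stepX stepY stepVx stepVy : ℝ → ℝ → ℝ → ℝ → ℝ)
    (hstepX : ∀ x y vx vy, stepX x y vx vy = (1/(1 + h^2)) * (h * vx + h^2 * vy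
      + x * (1 + 3*h^2/2) + (h^3/2) * y - (h^3/2) * Uy x y - (h^2/2) * Ux x y))
    (hstepY : ∀ x y vx vy, stepY x y vx vy = h * vy + h * x - h * stepX x y vx vy
      + y + (h^2/2) * y - (h^2/2) * Uy x y)
    (hstepVx : ∀ x y vx vy, stepVx x y vx vy = vx - 2 * y + 2 * stepY x y vx vy
      + (h/2) * (stepX x y vx vy + x)
      - (h/2) * Ux (stepX x y vx vy) (stepY x y vx vy) - (h/2) * Ux x y)
    (hstepVy : ∀ x y vx vy, stepVy x y vx vy = vy + 2 * x - 2 * stepX x y vx vy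
      + (h/2) * (stepY x y vx vy + y)
      - (h/2) * Uy (stepX x y vx vy) (stepY x y vx vy) - (h/2) * Uy x y)
    (Φ : (Fin 4 → ℝ) → (Fin 4 → ℝ))
    (hΦ : ∀ p : Fin 4 → ℝ, Φ p =
      ![stepX (p 0) (p 1) (p 2 + p 1) (p 3 - p 0),
        stepY (p 0) (p 1) (p 2 + p 1) (p 3 - p 0),
        stepVx (p 0) (p 1) (p 2 + p 1) (p 3 - p 0)
          - stepY (p 0) (p 1) (p 2 + p 1) (p 3 - p 0),
        stepVy (p 0) (p 1) (p 2 + p 1) (p 3 - p 0)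
          + stepX (p 0) (p 1) (p 2 + p 1) (p 3 - p 0)])
    (J : Matrix (Fin 4) (Fin 4) ℝ)
    (hJ : J = !![0, 0, 1, 0; 0, 0, 0, 1; -1, 0, 0, 0; 0, -1, 0, 0]) :
    ∀ p : Fin 4 → ℝ,
      0 < r1 (p 0) (p 1) → 0 < r2 (p 0) (p 1) →
      0 < r1 (stepX (p 0) (p 1) (p 2 + p 1) (p 3 - p 0))
             (stepY (p 0) (p 1) (p 2 + p 1) (p 3 - p 0)) →
      0 < r2 (stepX (p 0) (p 1) (p 2 + p 1) (p 3 - p 0))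
             (stepY (p 0) (p 1) (p 2 + p 1) (p 3 - p 0)) →
      DifferentiableAt ℝ Φ p →
      Matrix.transpose (Matrix.of fun i j : Fin 4 => fderiv ℝ Φ p (Pi.single j 1) i) * J *
        (Matrix.of fun i j : Fin 4 => fderiv ℝ Φ p (Pi.single j 1) i) = J := by
  intro p h1 h2 h3 h4 _hdiff
  have hne : (1:ℝ) + h^2 ≠ 0 := by positivity
  have hPhi : Φ = fun q => ![XF h Ux Uy q, YF h Ux Uy q, PXF h Ux Uy q, PYF h Ux Uy q] := by
    funext q
    rw [hΦ]
    simp only [hstepVx, hstepVy, hstepY, hstepX, XF, YF, PXF, PYF]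
  have eXp : stepX (p 0) (p 1) (p 2 + p 1) (p 3 - p 0) = XF h Ux Uy p := by
    rw [hstepX]; rfl
  have eYp : stepY (p 0) (p 1) (p 2 + p 1) (p 3 - p 0) = YF h Ux Uy p := by
    rw [hstepY, hstepX]; rfl
  rw [eXp, eYp, hr1def] at h3
  rw [eXp, eYp, hr2def] at h4
  rw [hr1def] at h1
  rw [hr2def] at h2
  have h2' : 0 < Real.sqrt ((p 0 + (μ - 1))^2 + (p 1)^2) := by
    have hq : p 0 - 1 + μ = p 0 + (μ - 1) := by ring
    rwa [hq] at h2
  have h4' : 0 < Real.sqrt ((XF h Ux Uy p + (μ - 1))^2 + (YF h Ux Uy p)^2) := by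
    have hq : XF h Ux Uy p - 1 + μ = XF h Ux Uy p + (μ - 1) := by ring
    rwa [hq] at h4
  have hUxf : (fun z : ℝ × ℝ => Ux z.1 z.2) = fun z : ℝ × ℝ =>
      (1 - μ) * (z.1 + μ) / (Real.sqrt ((z.1 + μ)^2 + z.2^2))^3
      + μ * (z.1 - 1 + μ) / (Real.sqrt ((z.1 - 1 + μ)^2 + z.2^2))^3 := by
    funext z; rw [hUx, hr1def, hr2def]
  have hUyf : (fun z : ℝ × ℝ => Uy z.1 z.2) = fun z : ℝ × ℝ =>
      (1 - μ) * z.2 / (Real.sqrt ((z.1 + μ)^2 + z.2^2))^3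
      + μ * z.2 / (Real.sqrt ((z.1 - 1 + μ)^2 + z.2^2))^3 := by
    funext z; rw [hUy, hr1def, hr2def]
  set a := gA μ (p 0, p 1) with ha
  set b := gB μ (p 0, p 1) with hb
  set d := gD μ (p 0, p 1) with hd
  set a' := gA μ (XF h Ux Uy p, YF h Ux Uy p) with ha'
  set b' := gB μ (XF h Ux Uy p, YF h Ux Uy p) with hb'
  set d' := gD μ (XF h Ux Uy p, YF h Ux Uy p) with hd'
  have hp0 : HasFDerivAt (fun q : Fin 4 → ℝ => q 0)
      (ContinuousLinearMap.proj (R := ℝ) (φ := fun _ : Fin 4 => ℝ) (0 : Fin 4)) p :=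
    (ContinuousLinearMap.proj (R := ℝ) (φ := fun _ : Fin 4 => ℝ) (0 : Fin 4)).hasFDerivAt
  have hp1 : HasFDerivAt (fun q : Fin 4 → ℝ => q 1)
      (ContinuousLinearMap.proj (R := ℝ) (φ := fun _ : Fin 4 => ℝ) (1 : Fin 4)) p :=
    (ContinuousLinearMap.proj (R := ℝ) (φ := fun _ : Fin 4 => ℝ) (1 : Fin 4)).hasFDerivAt
  have hp2 : HasFDerivAt (fun q : Fin 4 → ℝ => q 2)
      (ContinuousLinearMap.proj (R := ℝ) (φ := fun _ : Fin 4 => ℝ) (2 : Fin 4)) p :=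
    (ContinuousLinearMap.proj (R := ℝ) (φ := fun _ : Fin 4 => ℝ) (2 : Fin 4)).hasFDerivAt
  have hp3 : HasFDerivAt (fun q : Fin 4 → ℝ => q 3)
      (ContinuousLinearMap.proj (R := ℝ) (φ := fun _ : Fin 4 => ℝ) (3 : Fin 4)) p :=
    (ContinuousLinearMap.proj (R := ℝ) (φ := fun _ : Fin 4 => ℝ) (3 : Fin 4)).hasFDerivAt
  have hUxOld : HasFDerivAt (fun z : ℝ × ℝ => Ux z.1 z.2) (clm2 a b) (p 0, p 1) := by
    rw [hUxf]; exact hasF_Ux μ (p 0) (p 1) h1 h2'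
  have hUyOld : HasFDerivAt (fun z : ℝ × ℝ => Uy z.1 z.2) (clm2 b d) (p 0, p 1) := by
    rw [hUyf]; exact hasF_Uy μ (p 0) (p 1) h1 h2'
  have hUxNew : HasFDerivAt (fun z : ℝ × ℝ => Ux z.1 z.2) (clm2 a' b')
      (XF h Ux Uy p, YF h Ux Uy p) := by
    rw [hUxf]; exact hasF_Ux μ _ _ h3 h4'
  have hUyNew : HasFDerivAt (fun z : ℝ × ℝ => Uy z.1 z.2) (clm2 b' d')
      (XF h Ux Uy p, YF h Ux Uy p) := by
    rw [hUyf]; exact hasF_Uy μ _ _ h3 h4'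
  have hA : HasFDerivAt (fun q : Fin 4 → ℝ => Ux (q 0) (q 1))
      ((clm2 a b).comp ((ContinuousLinearMap.proj 0).prod (ContinuousLinearMap.proj 1))) p :=
    HasFDerivAt.comp (g := fun z : ℝ × ℝ => Ux z.1 z.2) p hUxOld (hp0.prodMk hp1)
  have hB : HasFDerivAt (fun q : Fin 4 → ℝ => Uy (q 0) (q 1))
      ((clm2 b d).comp ((ContinuousLinearMap.proj 0).prod (ContinuousLinearMap.proj 1))) p :=
    HasFDerivAt.comp (g := fun z : ℝ × ℝ => Uy z.1 z.2) p hUyOld (hp0.prodMk hp1)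
  have hX : HasFDerivAt (fun q => XF h Ux Uy q)
      (rowc (eX1 h a b) (eX2 h b d) (eX3 h) (eX4 h)) p := by
    refine HasFDerivAt.congr_fderiv
      ((((((((hp2.add hp1).const_mul h).add ((hp3.sub hp0).const_mul (h^2))).add
        (hp0.mul_const (1 + 3*h^2/2))).add (hp1.const_mul (h^3/2))).sub
        (hB.const_mul (h^3/2))).sub (hA.const_mul (h^2/2))).const_mul (1/(1 + h^2))) ?_
    ext v
    simp [eX1, eX2, eX3, eX4]
    field_simp
    ring
  have hY : HasFDerivAt (fun q => YF h Ux Uy q)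
      (rowc (eY1 h a b) (eY2 h b d) (eY3 h) (eY4 h)) p := by
    refine HasFDerivAt.congr_fderiv
      ((((((((hp3.sub hp0).const_mul h).add (hp0.const_mul h)).sub (hX.const_mul h)).add
        hp1).add (hp1.const_mul (h^2/2))).sub (hB.const_mul (h^2/2)))) ?_
    ext v
    simp [eY1, eY2, eY3, eY4, eX1, eX2, eX3, eX4]
    field_simp
    ring
  have hA' : HasFDerivAt (fun q : Fin 4 → ℝ => Ux (XF h Ux Uy q) (YF h Ux Uy q))
      ((clm2 a' b').comp ((rowc (eX1 h a b) (eX2 h b d) (eX3 h) (eX4 h)).prod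
        (rowc (eY1 h a b) (eY2 h b d) (eY3 h) (eY4 h)))) p :=
    HasFDerivAt.comp (g := fun z : ℝ × ℝ => Ux z.1 z.2) p hUxNew (hX.prodMk hY)
  have hB' : HasFDerivAt (fun q : Fin 4 → ℝ => Uy (XF h Ux Uy q) (YF h Ux Uy q))
      ((clm2 b' d').comp ((rowc (eX1 h a b) (eX2 h b d) (eX3 h) (eX4 h)).prod
        (rowc (eY1 h a b) (eY2 h b d) (eY3 h) (eY4 h)))) p :=
    HasFDerivAt.comp (g := fun z : ℝ × ℝ => Uy z.1 z.2) p hUyNew (hX.prodMk hY)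
  have hPX : HasFDerivAt (fun q => PXF h Ux Uy q)
      (rowc (ePX1 h a b a' b') (ePX2 h b d a' b') (ePX3 h a' b') (ePX4 h a' b')) p := by
    refine HasFDerivAt.congr_fderiv
      (((((((hp2.add hp1).sub (hp1.const_mul 2)).add (hY.const_mul 2)).add
        ((hX.add hp0).const_mul (h/2))).sub (hA'.const_mul (h/2))).sub
        (hA.const_mul (h/2))).sub hY) ?_
    ext v
    simp [ePX1, ePX2, ePX3, ePX4, eY1, eY2, eY3, eY4, eX1, eX2, eX3, eX4]
    field_simp
    ring
  have hPY : HasFDerivAt (fun q => PYF h Ux Uy q)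
      (rowc (ePY1 h a b b' d') (ePY2 h b d b' d') (ePY3 h b' d') (ePY4 h b' d')) p := by
    refine HasFDerivAt.congr_fderiv
      (((((((hp3.sub hp0).add (hp0.const_mul 2)).sub (hX.const_mul 2)).add
        ((hY.add hp1).const_mul (h/2))).sub (hB'.const_mul (h/2))).sub
        (hB.const_mul (h/2))).add hX) ?_
    ext v
    simp [ePY1, ePY2, ePY3, ePY4, eY1, eY2, eY3, eY4, eX1, eX2, eX3, eX4]
    field_simp
    ring
  have hD : HasFDerivAt Φ (ContinuousLinearMap.pi
      ![rowc (eX1 h a b) (eX2 h b d) (eX3 h) (eX4 h),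
        rowc (eY1 h a b) (eY2 h b d) (eY3 h) (eY4 h),
        rowc (ePX1 h a b a' b') (ePX2 h b d a' b') (ePX3 h a' b') (ePX4 h a' b'),
        rowc (ePY1 h a b b' d') (ePY2 h b d b' d') (ePY3 h b' d') (ePY4 h b' d')]) p := by
    rw [hPhi]
    apply hasFDerivAt_pi''
    intro i
    fin_cases i <;> rw [ContinuousLinearMap.proj_pi] <;>
      simp only [Fin.zero_eta, Fin.mk_one, Fin.isValue,
        show (⟨2, by norm_num⟩ : Fin 4) = 2 from rfl,
        show (⟨3, by norm_num⟩ : Fin 4) = 3 from rfl,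
        Matrix.cons_val_zero, Matrix.cons_val_one, Matrix.head_cons,
        Matrix.cons_val_two, Matrix.tail_cons, Matrix.cons_val_three]
    exacts [hX, hY, hPX, hPY]
  have hfd : fderiv ℝ Φ p = ContinuousLinearMap.pi
      ![rowc (eX1 h a b) (eX2 h b d) (eX3 h) (eX4 h),
        rowc (eY1 h a b) (eY2 h b d) (eY3 h) (eY4 h),
        rowc (ePX1 h a b a' b') (ePX2 h b d a' b') (ePX3 h a' b') (ePX4 h a' b'),
        rowc (ePY1 h a b b' d') (ePY2 h b d b' d') (ePY3 h b' d') (ePY4 h b' d')] := hD.fderiv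
  have hM : (Matrix.of fun i j : Fin 4 => fderiv ℝ Φ p (Pi.single j 1) i)
      = Mexp h a b d a' b' d' := by
    simp only [hfd]
    ext i j
    fin_cases i <;> fin_cases j <;>
      simp [Mexp, ContinuousLinearMap.pi_apply, Pi.single_apply]
  rw [hM, hJ]
  exact key h a b d a' b' d'
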